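/- arXiv:2008.07390 — 6 statements merged into one kernel-verified Lean document; each statement's English description precedes it below -/
import Mathlib

section
/- Let M be a smooth n-manifold and let σ, ν : M → ℝ^{n+2} be an immersion of M into ℍ^{n+1} with unit normal ν having small principal curvatures. Then for every t ∈ ℝ the normal evolution σ_t = cosh(t)σ + sinh(t)ν is again an immersion of M into ℍ^{n+1} (i.e. d_p σ_t is injective for every p, ⟨σ_t,σ_t⟩ = −1 and (σ_t)_{n+2} > 0), the map ν_t = sinh(t)σ + cosh(t)ν is a unit normal for σ_t, and σ_t has small principal curvatures: ⟨d_pν_t(v), d_pν_t(v)⟩ < ⟨d_pσ_t(v), d_pσ_t(v)⟩ for every p and every nonzero v ∈ T_pM. -/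
open scoped Manifold

/-- The Minkowski bilinear form on `ℝ^{n+2}`:
`⟨x,y⟩ = x₁y₁ + ⋯ + x_{n+1}y_{n+1} − x_{n+2}y_{n+2}`. -/
noncomputable def mink (n : ℕ) (x y : Fin (n + 2) → ℝ) : ℝ :=
  (∑ i : Fin (n + 1), x i.castSucc * y i.castSucc) -
    x (Fin.last (n + 1)) * y (Fin.last (n + 1))

set_option maxHeartbeats 1000000

lemma mink_comm (n : ℕ) (x y : Fin (n + 2) → ℝ) : mink n x y = mink n y x := by
  simp [mink, mul_comm]

lemma mink_bilin (n : ℕ) (a b c d : ℝ) (x y z w : Fin (n + 2) → ℝ) :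
    mink n (a • x + b • y) (c • z + d • w) =
      a * c * mink n x z + a * d * mink n x w + b * c * mink n y z + b * d * mink n y w := by
  have h : ∀ i : Fin (n + 1),
      (a * x i.castSucc + b * y i.castSucc) * (c * z i.castSucc + d * w i.castSucc) =
        a * c * (x i.castSucc * z i.castSucc) + a * d * (x i.castSucc * w i.castSucc) +
          b * c * (y i.castSucc * z i.castSucc) + b * d * (y i.castSucc * w i.castSucc) :=
    fun i => by ring
  simp only [mink, Pi.add_apply, Pi.smul_apply, smul_eq_mul, h, Finset.sum_add_distrib,
    ← Finset.mul_sum]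
  ring

lemma mink_smul₂ (n : ℕ) (r t : ℝ) (x y : Fin (n + 2) → ℝ) :
    mink n (r • x) (t • y) = r * t * mink n x y := by
  have h : ∀ i : Fin (n + 1),
      r * x i.castSucc * (t * y i.castSucc) = r * t * (x i.castSucc * y i.castSucc) :=
    fun i => by ring
  simp only [mink, Pi.smul_apply, smul_eq_mul, h, ← Finset.mul_sum]
  ring

-- positive semidefinite on orthogonal complement of timelike x
lemma mink_orth_nonneg (n : ℕ) {x w : Fin (n + 2) → ℝ} (hx : mink n x x = -1)
    (hw : mink n x w = 0) : 0 ≤ mink n w w ∧ (mink n w w = 0 → w = 0) := by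
  set L := Fin.last (n + 1)
  have hsum : ∑ i : Fin (n + 1), x i.castSucc * w i.castSucc = x L * w L := by
    have := hw; simp only [mink] at this; linarith
  have hxx : ∑ i : Fin (n + 1), x i.castSucc * x i.castSucc = x L * x L - 1 := by
    have := hx; simp only [mink] at this; linarith
  have hCS := Finset.sum_mul_sq_le_sq_mul_sq Finset.univ (fun i : Fin (n+1) => x i.castSucc)
    (fun i : Fin (n+1) => w i.castSucc)
  simp only [sq] at hCS
  rw [hsum, hxx] at hCS
  have hwsq : 0 ≤ ∑ i : Fin (n + 1), w i.castSucc * w i.castSucc :=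
    Finset.sum_nonneg fun i _ => mul_self_nonneg _
  have hx2 : 1 ≤ x L * x L := by nlinarith [Finset.sum_nonneg (fun (i : Fin (n+1)) (_ : i ∈ Finset.univ) => mul_self_nonneg (x i.castSucc))]
  have key : x L * x L * (mink n w w) ≥ ∑ i : Fin (n + 1), w i.castSucc * w i.castSucc := by
    simp only [mink]; nlinarith
  constructor
  · nlinarith
  · intro h0
    have hz : ∑ i : Fin (n + 1), w i.castSucc * w i.castSucc = 0 := by nlinarith
    have hL : w L * w L = 0 := by simp only [mink] at h0; linarith
    funext i
    rcases Fin.eq_castSucc_or_eq_last i with ⟨j, rfl⟩ | rfl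
    · have := (Finset.sum_eq_zero_iff_of_nonneg (fun i _ => mul_self_nonneg (w i.castSucc))).1 hz j (Finset.mem_univ j)
      have := mul_self_eq_zero.1 this
      simpa using this
    · simpa using mul_self_eq_zero.1 hL


lemma mink_last_bound (n : ℕ) {x y : Fin (n + 2) → ℝ} (hx : mink n x x = -1)
    (hy : mink n y y = 1) (hxy : mink n x y = 0) :
    y (Fin.last (n+1)) * y (Fin.last (n+1)) + 1 ≤ x (Fin.last (n+1)) * x (Fin.last (n+1)) := by
  set L := Fin.last (n+1)
  have hsum : ∑ i : Fin (n+1), x i.castSucc * y i.castSucc = x L * y L := by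
    simp only [mink] at hxy; linarith
  have hxx : ∑ i : Fin (n+1), x i.castSucc * x i.castSucc = x L * x L - 1 := by
    simp only [mink] at hx; linarith
  have hyy : ∑ i : Fin (n+1), y i.castSucc * y i.castSucc = y L * y L + 1 := by
    simp only [mink] at hy; linarith
  have hCS := Finset.sum_mul_sq_le_sq_mul_sq Finset.univ (fun i : Fin (n+1) => x i.castSucc)
    (fun i : Fin (n+1) => y i.castSucc)
  simp only [sq] at hCS
  rw [hsum, hxx, hyy] at hCS
  nlinarith [hCS]

section
variable {n : ℕ} {M : Type*} [TopologicalSpace M]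
    [ChartedSpace (EuclideanSpace ℝ (Fin n)) M]
    [IsManifold (𝓡 n) (⊤ : ℕ∞) M]

lemma my_hasMFDerivAt_sum {ι : Type*} (s : Finset ι) (F : ι → M → ℝ) {p : M}
    (F' : ι → EuclideanSpace ℝ (Fin n) →L[ℝ] ℝ)
    (h : ∀ i ∈ s, HasMFDerivAt (𝓡 n) 𝓘(ℝ, ℝ) (F i) p (F' i)) :
    HasMFDerivAt (𝓡 n) 𝓘(ℝ, ℝ) (fun q => ∑ i ∈ s, F i q) p (∑ i ∈ s, F' i) := by
  induction s using Finset.cons_induction with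
  | empty =>
    simp only [Finset.sum_empty]
    exact hasMFDerivAt_const (I := 𝓡 n) (I' := 𝓘(ℝ, ℝ)) (0 : ℝ) p
  | cons a s' ha ih =>
    have hfun : (fun q => ∑ i ∈ Finset.cons a s' ha, F i q) =
        (F a + fun q => ∑ i ∈ s', F i q) := by
      funext q; simp [Finset.sum_cons]
    rw [hfun, Finset.sum_cons]
    have hs : ∑ i ∈ Finset.cons a s' ha, F' i = F' a + ∑ i ∈ s', F' i := Finset.sum_cons ha
    have := HasMFDerivAt.add (h a (Finset.mem_cons_self a s'))
      (ih fun i hi => h i (Finset.mem_cons_of_mem hi))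
    exact Eq.mpr (congrArg (fun D : EuclideanSpace ℝ (Fin n) →L[ℝ] ℝ =>
      HasMFDerivAt (𝓡 n) 𝓘(ℝ, ℝ) (F a + fun q => ∑ i ∈ s', F i q) p D) hs) this

/-- derivative of the Minkowski pairing of two maps -/
lemma hasMFDerivAt_mink {f g : M → Fin (n + 2) → ℝ} {p : M}
    {f' g' : EuclideanSpace ℝ (Fin n) →L[ℝ] Fin (n + 2) → ℝ}
    (hf : HasMFDerivAt (𝓡 n) 𝓘(ℝ, Fin (n + 2) → ℝ) f p f')
    (hg : HasMFDerivAt (𝓡 n) 𝓘(ℝ, Fin (n + 2) → ℝ) g p g') (v : EuclideanSpace ℝ (Fin n)) :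
    mfderiv (𝓡 n) 𝓘(ℝ, ℝ) (fun q => mink n (f q) (g q)) p v =
      mink n (f' v) (g p) + mink n (f p) (g' v) := by
  have hcoordf : ∀ i : Fin (n + 2), HasMFDerivAt (𝓡 n) 𝓘(ℝ, ℝ) (fun q => f q i) p
      ((ContinuousLinearMap.proj i).comp f') := fun i =>
    ((ContinuousLinearMap.proj (R := ℝ) (φ := fun _ : Fin (n+2) => ℝ) i).hasMFDerivAt).comp p hf
  have hcoordg : ∀ i : Fin (n + 2), HasMFDerivAt (𝓡 n) 𝓘(ℝ, ℝ) (fun q => g q i) p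
      ((ContinuousLinearMap.proj i).comp g') := fun i =>
    ((ContinuousLinearMap.proj (R := ℝ) (φ := fun _ : Fin (n+2) => ℝ) i).hasMFDerivAt).comp p hg
  have hmul : ∀ i : Fin (n + 2), HasMFDerivAt (𝓡 n) 𝓘(ℝ, ℝ) (fun q => f q i * g q i) p
      (f p i • ((ContinuousLinearMap.proj i).comp g') +
        g p i • ((ContinuousLinearMap.proj i).comp f')) := fun i =>
    (hcoordf i).mul (hcoordg i)
  have heq : (fun q => mink n (f q) (g q)) =
      fun q => (∑ i : Fin (n + 1), f q i.castSucc * g q i.castSucc) -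
        f q (Fin.last (n+1)) * g q (Fin.last (n+1)) := by
    funext q; simp [mink]
  let D : EuclideanSpace ℝ (Fin n) →L[ℝ] ℝ :=
    (∑ i : Fin (n + 1), (f p i.castSucc • ((ContinuousLinearMap.proj i.castSucc).comp g') +
        g p i.castSucc • ((ContinuousLinearMap.proj i.castSucc).comp f'))) -
      (f p (Fin.last (n+1)) • ((ContinuousLinearMap.proj (Fin.last (n+1))).comp g') +
        g p (Fin.last (n+1)) • ((ContinuousLinearMap.proj (Fin.last (n+1))).comp f'))
  have hsum : HasMFDerivAt (𝓡 n) 𝓘(ℝ, ℝ)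
      (fun q => (∑ i : Fin (n + 1), f q i.castSucc * g q i.castSucc) -
        f q (Fin.last (n+1)) * g q (Fin.last (n+1))) p D :=
    HasMFDerivAt.sub
      (my_hasMFDerivAt_sum Finset.univ (fun (i : Fin (n+1)) q => f q i.castSucc * g q i.castSucc) _
        (fun i _ => hmul i.castSucc))
      (hmul (Fin.last (n+1)))
  rw [heq, hsum.mfderiv]
  show D v = _
  simp only [D, ContinuousLinearMap.sub_apply, ContinuousLinearMap.add_apply,
    ContinuousLinearMap.sum_apply, ContinuousLinearMap.smul_apply,
    ContinuousLinearMap.comp_apply, ContinuousLinearMap.proj_apply, smul_eq_mul, mink,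
    Finset.sum_add_distrib]
  rw [show (∑ x : Fin (n+1), g p x.castSucc * f' v x.castSucc) =
      ∑ x : Fin (n+1), f' v x.castSucc * g p x.castSucc from
    Finset.sum_congr rfl fun i _ => mul_comm _ _,
    show (∑ x : Fin (n+1), f p x.castSucc * g' v x.castSucc) =
      ∑ x : Fin (n+1), g' v x.castSucc * f p x.castSucc from
    Finset.sum_congr rfl fun i _ => mul_comm _ _]
  ring

lemma mink_deriv_const {f g : M → Fin (n + 2) → ℝ} {p : M}
    {f' g' : EuclideanSpace ℝ (Fin n) →L[ℝ] Fin (n + 2) → ℝ}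
    (hf : HasMFDerivAt (𝓡 n) 𝓘(ℝ, Fin (n + 2) → ℝ) f p f')
    (hg : HasMFDerivAt (𝓡 n) 𝓘(ℝ, Fin (n + 2) → ℝ) g p g') {r : ℝ}
    (hc : ∀ q, mink n (f q) (g q) = r) (v : EuclideanSpace ℝ (Fin n)) :
    mink n (f' v) (g p) + mink n (f p) (g' v) = 0 := by
  rw [← hasMFDerivAt_mink hf hg v]
  have : (fun q => mink n (f q) (g q)) = fun _ => r := funext hc
  rw [this, mfderiv_const]
  rfl

end

/-- If `σ : M → ℍ^{n+1}` is an immersion with unit normal `ν` having small principal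
curvatures, then for every `t` the normal evolution `σ_t = cosh(t)σ + sinh(t)ν` is again
an immersion into `ℍ^{n+1}` with unit normal `ν_t = sinh(t)σ + cosh(t)ν` and small
principal curvatures. -/
theorem normal_evolution_small_principal_curvatures
    {n : ℕ} {M : Type*} [TopologicalSpace M]
    [ChartedSpace (EuclideanSpace ℝ (Fin n)) M]
    [IsManifold (𝓡 n) (⊤ : ℕ∞) M]
    (σ ν : M → Fin (n + 2) → ℝ)
    (hσ : ContMDiff (𝓡 n) 𝓘(ℝ, Fin (n + 2) → ℝ) (⊤ : ℕ∞) σ)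
    (hν : ContMDiff (𝓡 n) 𝓘(ℝ, Fin (n + 2) → ℝ) (⊤ : ℕ∞) ν)
    (hσσ : ∀ p, mink n (σ p) (σ p) = -1)
    (hpos : ∀ p, 0 < σ p (Fin.last (n + 1)))
    (hνν : ∀ p, mink n (ν p) (ν p) = 1)
    (hσν : ∀ p, mink n (σ p) (ν p) = 0)
    (himm : ∀ p, Function.Injective (mfderiv (𝓡 n) 𝓘(ℝ, Fin (n + 2) → ℝ) σ p))
    (hnormal : ∀ p (v : EuclideanSpace ℝ (Fin n)),
      mink n (mfderiv (𝓡 n) 𝓘(ℝ, Fin (n + 2) → ℝ) σ p v) (ν p) = 0)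
    (hsmall : ∀ p (v : EuclideanSpace ℝ (Fin n)), v ≠ 0 →
      mink n (mfderiv (𝓡 n) 𝓘(ℝ, Fin (n + 2) → ℝ) ν p v)
          (mfderiv (𝓡 n) 𝓘(ℝ, Fin (n + 2) → ℝ) ν p v) <
        mink n (mfderiv (𝓡 n) 𝓘(ℝ, Fin (n + 2) → ℝ) σ p v)
          (mfderiv (𝓡 n) 𝓘(ℝ, Fin (n + 2) → ℝ) σ p v)) :
    ∀ (t : ℝ) (p : M),
      mink n (Real.cosh t • σ p + Real.sinh t • ν p)
        (Real.cosh t • σ p + Real.sinh t • ν p) = -1 ∧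
      0 < (Real.cosh t • σ p + Real.sinh t • ν p) (Fin.last (n + 1)) ∧
      Function.Injective (mfderiv (𝓡 n) 𝓘(ℝ, Fin (n + 2) → ℝ)
        (fun q => Real.cosh t • σ q + Real.sinh t • ν q) p) ∧
      mink n (Real.sinh t • σ p + Real.cosh t • ν p)
        (Real.sinh t • σ p + Real.cosh t • ν p) = 1 ∧
      mink n (Real.cosh t • σ p + Real.sinh t • ν p)
        (Real.sinh t • σ p + Real.cosh t • ν p) = 0 ∧
      (∀ v : EuclideanSpace ℝ (Fin n),
        mink n (mfderiv (𝓡 n) 𝓘(ℝ, Fin (n + 2) → ℝ)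
            (fun q => Real.cosh t • σ q + Real.sinh t • ν q) p v)
          (Real.sinh t • σ p + Real.cosh t • ν p) = 0) ∧
      (∀ v : EuclideanSpace ℝ (Fin n), v ≠ 0 →
        mink n (mfderiv (𝓡 n) 𝓘(ℝ, Fin (n + 2) → ℝ)
            (fun q => Real.sinh t • σ q + Real.cosh t • ν q) p v)
          (mfderiv (𝓡 n) 𝓘(ℝ, Fin (n + 2) → ℝ)
            (fun q => Real.sinh t • σ q + Real.cosh t • ν q) p v) <
        mink n (mfderiv (𝓡 n) 𝓘(ℝ, Fin (n + 2) → ℝ)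
            (fun q => Real.cosh t • σ q + Real.sinh t • ν q) p v)
          (mfderiv (𝓡 n) 𝓘(ℝ, Fin (n + 2) → ℝ)
            (fun q => Real.cosh t • σ q + Real.sinh t • ν q) p v)) := by
  intro t p
  set c := Real.cosh t with hcdef
  set s := Real.sinh t with hsdef
  have hch : c * c = s * s + 1 := by
    have h := Real.cosh_sq_sub_sinh_sq t
    rw [sq, sq] at h; rw [hcdef, hsdef]; linarith
  have hcpos : 0 < c := Real.cosh_pos t
  -- derivatives
  let A : EuclideanSpace ℝ (Fin n) →L[ℝ] (Fin (n + 2) → ℝ) :=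
    mfderiv (𝓡 n) 𝓘(ℝ, Fin (n + 2) → ℝ) σ p
  let B : EuclideanSpace ℝ (Fin n) →L[ℝ] (Fin (n + 2) → ℝ) :=
    mfderiv (𝓡 n) 𝓘(ℝ, Fin (n + 2) → ℝ) ν p
  have hA : HasMFDerivAt (𝓡 n) 𝓘(ℝ, Fin (n + 2) → ℝ) σ p A :=
    (hσ.mdifferentiable (by simp) p).hasMFDerivAt
  have hB : HasMFDerivAt (𝓡 n) 𝓘(ℝ, Fin (n + 2) → ℝ) ν p B :=
    (hν.mdifferentiable (by simp) p).hasMFDerivAt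
  -- orthogonality of derivatives
  have h1 : ∀ v : EuclideanSpace ℝ (Fin n), mink n (A v) (σ p) = 0 := by
    intro v
    have := mink_deriv_const hA hA hσσ v
    rw [mink_comm n (σ p) (A v)] at this
    linarith
  have h2 : ∀ v : EuclideanSpace ℝ (Fin n), mink n (A v) (ν p) = 0 := fun v => hnormal p v
  have h4 : ∀ v : EuclideanSpace ℝ (Fin n), mink n (B v) (ν p) = 0 := by
    intro v
    have := mink_deriv_const hB hB hνν v
    rw [mink_comm n (ν p) (B v)] at this
    linarith
  have h3 : ∀ v : EuclideanSpace ℝ (Fin n), mink n (B v) (σ p) = 0 := by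
    intro v
    have := mink_deriv_const hA hB hσν v
    rw [mink_comm n (σ p) (B v)] at this
    have h2v := h2 v
    linarith
  -- derivative of the evolved maps
  have hT : HasMFDerivAt (𝓡 n) 𝓘(ℝ, Fin (n + 2) → ℝ)
      (fun q => c • σ q + s • ν q) p (c • A + s • B) := by
    have h := (hA.const_smul c).add (hB.const_smul s)
    have hfun : (c • σ + s • ν) = (fun q => c • σ q + s • ν q) := rfl
    rwa [hfun] at h
  have hT' : HasMFDerivAt (𝓡 n) 𝓘(ℝ, Fin (n + 2) → ℝ)
      (fun q => s • σ q + c • ν q) p (s • A + c • B) := by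
    have h := (hA.const_smul s).add (hB.const_smul c)
    have hfun : (s • σ + c • ν) = (fun q => s • σ q + c • ν q) := rfl
    rwa [hfun] at h
  have hTv : ∀ v : EuclideanSpace ℝ (Fin n),
      mfderiv (𝓡 n) 𝓘(ℝ, Fin (n + 2) → ℝ) (fun q => c • σ q + s • ν q) p v
        = c • A v + s • B v := by
    intro v; rw [hT.mfderiv]; rfl
  have hT'v : ∀ v : EuclideanSpace ℝ (Fin n),
      mfderiv (𝓡 n) 𝓘(ℝ, Fin (n + 2) → ℝ) (fun q => s • σ q + c • ν q) p v
        = s • A v + c • B v := by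
    intro v; rw [hT'.mfderiv]; rfl
  refine ⟨?_, ?_, ?_, ?_, ?_, ?_, ?_⟩
  · rw [mink_bilin]
    rw [hσσ p, hνν p, hσν p, mink_comm n (ν p) (σ p), hσν p]
    linarith
  · -- positivity of last coordinate
    have hlast : ν p (Fin.last (n+1)) * ν p (Fin.last (n+1)) + 1 ≤
        σ p (Fin.last (n+1)) * σ p (Fin.last (n+1)) :=
      mink_last_bound n (hσσ p) (hνν p) (hσν p)
    have hx := hpos p
    simp only [Pi.add_apply, Pi.smul_apply, smul_eq_mul]
    nlinarith [mul_pos hcpos hx, sq_nonneg (c * σ p (Fin.last (n+1)) + s * ν p (Fin.last (n+1))),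
      sq_nonneg (c * σ p (Fin.last (n+1)) - s * ν p (Fin.last (n+1))), sq_nonneg s,
      mul_self_nonneg (ν p (Fin.last (n+1)))]
  · -- injectivity
    have hker : ∀ u : EuclideanSpace ℝ (Fin n), u ≠ 0 →
        mfderiv (𝓡 n) 𝓘(ℝ, Fin (n + 2) → ℝ) (fun q => c • σ q + s • ν q) p u ≠ 0 := by
      intro u hu habs
      rw [hTv u] at habs
      have ha_ne : A u ≠ 0 := by
        intro h0
        exact hu (himm p (show A u = A 0 from by rw [h0, map_zero]))
      have horthA := h1 u
      have horthB := h3 u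
      rw [mink_comm] at horthA horthB
      obtain ⟨hqa0, hqaz⟩ := mink_orth_nonneg n (hσσ p) horthA
      obtain ⟨hqb0, _⟩ := mink_orth_nonneg n (hσσ p) horthB
      have hqa_pos : 0 < mink n (A u) (A u) :=
        lt_of_le_of_ne hqa0 (fun h => ha_ne (hqaz h.symm))
      have hlt : mink n (B u) (B u) < mink n (A u) (A u) := hsmall p u hu
      have hsb : s • B u = (-c) • A u := by
        rw [neg_smul]
        exact eq_neg_of_add_eq_zero_right habs
      have hkey : s * s * mink n (B u) (B u) = (-c) * (-c) * mink n (A u) (A u) := by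
        rw [← mink_smul₂, ← mink_smul₂, hsb]
      nlinarith [mul_le_mul_of_nonneg_left hlt.le (mul_self_nonneg s), hkey, hch,
        hqa_pos, hqb0]
    intro v w hvw
    by_contra hne
    have hsub : mfderiv (𝓡 n) 𝓘(ℝ, Fin (n + 2) → ℝ) (fun q => c • σ q + s • ν q) p (v - w) = 0 := by
      rw [map_sub, hvw, sub_self]
    exact hker (v - w) (sub_ne_zero.2 hne) hsub
  · rw [mink_bilin, hσσ p, hνν p, hσν p, mink_comm n (ν p) (σ p), hσν p]
    linarith
  · rw [mink_bilin, hσσ p, hνν p, hσν p, mink_comm n (ν p) (σ p), hσν p]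
    ring
  · intro v
    rw [hTv v, mink_bilin, h1 v, h2 v, h3 v, h4 v]
    ring
  · intro v hv
    rw [hTv v, hT'v v, mink_bilin, mink_bilin]
    have hlt : mink n (B v) (B v) < mink n (A v) (A v) := hsmall p v hv
    rw [mink_comm n (B v) (A v)]
    nlinarith [hlt, hch]
end

section
/- Let M be a smooth n-manifold, let σ, ν : M → ℝ^{n+2} be an immersion of M into ℍ^{n+1} with unit normal ν, and suppose that for each p ∈ M there is a linear endomorphism B_p of T_pM (the shape operator) with d_pν = −d_pσ ∘ B_p. Fix t ∈ ℝ, set σ_t = cosh(t)σ + sinh(t)ν and ν_t = sinh(t)σ + cosh(t)ν, and assume id − tanh(t)·B_p is invertible. Then d_pσ_t = d_pσ ∘ (cosh(t)·id − sinh(t)·B_p), and d_pν_t = −d_pσ_t ∘ B_{t,p}, where B_{t,p} = (id − tanh(t)·B_p)^{-1} ∘ (B_p − tanh(t)·id); that is, B_{t,p} is the shape operator of the normal evolution σ_t. -/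
open scoped Manifold

/-- If `σ : M → ℍ^{n+1}` is an immersion with unit normal `ν` and shape operator `B`
(`dν = −dσ ∘ B`), then the normal evolution `σ_t = cosh(t)σ + sinh(t)ν` has differential
`dσ_t = dσ ∘ (cosh(t)·id − sinh(t)·B)` and, provided `id − tanh(t)B` is invertible, its
normal `ν_t = sinh(t)σ + cosh(t)ν` satisfies `dν_t = −dσ_t ∘ B_t` with
`B_t = (id − tanh(t)B)⁻¹ ∘ (B − tanh(t)·id)`. -/
theorem shape_operator_normal_evolution
    {n : ℕ} {M : Type*} [TopologicalSpace M]
    [ChartedSpace (EuclideanSpace ℝ (Fin n)) M]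
    [IsManifold (𝓡 n) (⊤ : ℕ∞) M]
    (σ ν : M → Fin (n + 2) → ℝ)
    (hσ : ContMDiff (𝓡 n) 𝓘(ℝ, Fin (n + 2) → ℝ) (⊤ : ℕ∞) σ)
    (hν : ContMDiff (𝓡 n) 𝓘(ℝ, Fin (n + 2) → ℝ) (⊤ : ℕ∞) ν)
    (hσσ : ∀ p, mink n (σ p) (σ p) = -1)
    (hpos : ∀ p, 0 < σ p (Fin.last (n + 1)))
    (hνν : ∀ p, mink n (ν p) (ν p) = 1)
    (hσν : ∀ p, mink n (σ p) (ν p) = 0)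
    (himm : ∀ p, Function.Injective (mfderiv (𝓡 n) 𝓘(ℝ, Fin (n + 2) → ℝ) σ p))
    (hnormal : ∀ p (v : EuclideanSpace ℝ (Fin n)),
      mink n (mfderiv (𝓡 n) 𝓘(ℝ, Fin (n + 2) → ℝ) σ p v) (ν p) = 0)
    (B : M → Module.End ℝ (EuclideanSpace ℝ (Fin n)))
    (hshape : ∀ p (v : EuclideanSpace ℝ (Fin n)),
      mfderiv (𝓡 n) 𝓘(ℝ, Fin (n + 2) → ℝ) ν p v =
        -(mfderiv (𝓡 n) 𝓘(ℝ, Fin (n + 2) → ℝ) σ p (B p v)))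
    (t : ℝ) (p : M)
    (hinv : IsUnit ((1 : Module.End ℝ (EuclideanSpace ℝ (Fin n))) - Real.tanh t • B p)) :
    (∀ v : EuclideanSpace ℝ (Fin n),
      mfderiv (𝓡 n) 𝓘(ℝ, Fin (n + 2) → ℝ)
          (fun q => Real.cosh t • σ q + Real.sinh t • ν q) p v =
        mfderiv (𝓡 n) 𝓘(ℝ, Fin (n + 2) → ℝ) σ p
          ((Real.cosh t • (1 : Module.End ℝ (EuclideanSpace ℝ (Fin n))) -
              Real.sinh t • B p) v)) ∧
    (∀ v : EuclideanSpace ℝ (Fin n),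
      mfderiv (𝓡 n) 𝓘(ℝ, Fin (n + 2) → ℝ)
          (fun q => Real.sinh t • σ q + Real.cosh t • ν q) p v =
        -(mfderiv (𝓡 n) 𝓘(ℝ, Fin (n + 2) → ℝ)
            (fun q => Real.cosh t • σ q + Real.sinh t • ν q) p
          ((Ring.inverse ((1 : Module.End ℝ (EuclideanSpace ℝ (Fin n))) -
                Real.tanh t • B p) *
              (B p - Real.tanh t • (1 : Module.End ℝ (EuclideanSpace ℝ (Fin n))))) v))) := by
  have hσd := (hσ p).mdifferentiableAt (by simp)
  have hνd := (hν p).mdifferentiableAt (by simp)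
  obtain ⟨Dσ, hDσ⟩ : ∃ D : EuclideanSpace ℝ (Fin n) →L[ℝ] (Fin (n + 2) → ℝ),
      HasMFDerivAt (𝓡 n) 𝓘(ℝ, Fin (n + 2) → ℝ) σ p D :=
    ⟨mfderiv (𝓡 n) 𝓘(ℝ, Fin (n + 2) → ℝ) σ p, hσd.hasMFDerivAt⟩
  obtain ⟨Dν, hDν⟩ : ∃ D : EuclideanSpace ℝ (Fin n) →L[ℝ] (Fin (n + 2) → ℝ),
      HasMFDerivAt (𝓡 n) 𝓘(ℝ, Fin (n + 2) → ℝ) ν p D :=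
    ⟨mfderiv (𝓡 n) 𝓘(ℝ, Fin (n + 2) → ℝ) ν p, hνd.hasMFDerivAt⟩
  have hDσe : mfderiv (𝓡 n) 𝓘(ℝ, Fin (n + 2) → ℝ) σ p = Dσ := hDσ.mfderiv
  have hDνe : mfderiv (𝓡 n) 𝓘(ℝ, Fin (n + 2) → ℝ) ν p = Dν := hDν.mfderiv
  have hs : ∀ v : EuclideanSpace ℝ (Fin n), Dν v = -(Dσ (B p v)) := by
    intro v
    have := hshape p v
    rw [hDσe, hDνe] at this
    exact this
  have key : ∀ a b : ℝ, ∀ v : EuclideanSpace ℝ (Fin n),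
      mfderiv (𝓡 n) 𝓘(ℝ, Fin (n + 2) → ℝ)
        (fun q => a • σ q + b • ν q) p v = a • Dσ v + b • Dν v := by
    intro a b v
    have h := (hDσ.const_smul a).add (hDν.const_smul b)
    have h2 := h.mfderiv
    show mfderiv (𝓡 n) 𝓘(ℝ, Fin (n + 2) → ℝ) (a • σ + b • ν) p v = _
    rw [h2]
    rfl
  have hcosh : Real.cosh t ≠ 0 := (Real.cosh_pos t).ne'
  have hst : Real.cosh t * Real.tanh t = Real.sinh t := by
    rw [Real.tanh_eq_sinh_div_cosh]; field_simp
  -- first part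
  have part1 : ∀ v : EuclideanSpace ℝ (Fin n),
      mfderiv (𝓡 n) 𝓘(ℝ, Fin (n + 2) → ℝ)
          (fun q => Real.cosh t • σ q + Real.sinh t • ν q) p v =
        Dσ ((Real.cosh t • (1 : Module.End ℝ (EuclideanSpace ℝ (Fin n))) -
              Real.sinh t • B p) v) := by
    intro v
    rw [key, hs v]
    have : ((Real.cosh t • (1 : Module.End ℝ (EuclideanSpace ℝ (Fin n))) -
        Real.sinh t • B p) v) = Real.cosh t • v - Real.sinh t • (B p v) := by
      simp [LinearMap.smul_apply]
    rw [this, map_sub, map_smul, map_smul]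
    rw [smul_neg, sub_eq_add_neg]
  constructor
  · intro v
    rw [part1 v, hDσe]
    exact rfl

  -- algebraic identity of endomorphisms
  have hA : Real.cosh t • ((1 : Module.End ℝ (EuclideanSpace ℝ (Fin n))) -
      Real.tanh t • B p) =
      Real.cosh t • (1 : Module.End ℝ (EuclideanSpace ℝ (Fin n))) - Real.sinh t • B p := by
    rw [smul_sub, smul_smul, hst]
  have halg : (Real.cosh t • (1 : Module.End ℝ (EuclideanSpace ℝ (Fin n))) -
        Real.sinh t • B p) *
      (Ring.inverse ((1 : Module.End ℝ (EuclideanSpace ℝ (Fin n))) - Real.tanh t • B p) *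
        (B p - Real.tanh t • (1 : Module.End ℝ (EuclideanSpace ℝ (Fin n))))) =
      Real.cosh t • B p - Real.sinh t • (1 : Module.End ℝ (EuclideanSpace ℝ (Fin n))) := by
    rw [← hA, smul_mul_assoc, ← mul_assoc,
      Ring.mul_inverse_cancel _ hinv, one_mul, smul_sub, smul_smul, hst]
  intro v
  rw [key, part1, hs v]
  have happ : ((Real.cosh t • (1 : Module.End ℝ (EuclideanSpace ℝ (Fin n))) -
      Real.sinh t • B p)
      ((Ring.inverse ((1 : Module.End ℝ (EuclideanSpace ℝ (Fin n))) - Real.tanh t • B p) *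
        (B p - Real.tanh t • (1 : Module.End ℝ (EuclideanSpace ℝ (Fin n))))) v)) =
      Real.cosh t • (B p v) - Real.sinh t • v := by
    have := congrArg (fun (E : Module.End ℝ (EuclideanSpace ℝ (Fin n))) => E v) halg
    simpa [Module.End.mul_apply, LinearMap.smul_apply] using this
  rw [happ, map_sub, map_smul, map_smul]
  rw [smul_neg]
  show (Real.sinh t • Dσ v + -(Real.cosh t • Dσ (B p v)) : Fin (n + 2) → ℝ) =
    -(Real.cosh t • Dσ (B p v) - Real.sinh t • Dσ v)
  abel
end

section
/- Let n ≥ 1, let B be a symmetric real n×n matrix with ‖Bv‖ < ‖v‖ for every nonzero v ∈ ℝⁿ (equivalently, all eigenvalues of B lie in (−1,1)), let t ∈ ℝ and set τ = tanh(t). Then the matrix 1 − τB is invertible; setting B_t = (1 − τB)^{-1}(B − τ·1), the determinants det(1 + B_t) and det(1 − B_t) are strictly positive, and (1/(2n))·log( det(1 + B_t) / det(1 − B_t) ) = (1/(2n))·log( det(1 + B) / det(1 − B) ) − t. -/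
open Matrix Real

private lemma aux_posdef {n : ℕ} (B : Matrix (Fin n) (Fin n) ℝ) (hsymm : B.IsSymm)
    (hsmall : ∀ v : Fin n → ℝ, v ≠ 0 →
      ∑ i, (B.mulVec v i) ^ 2 < ∑ i, (v i) ^ 2)
    (s : ℝ) (hs : |s| ≤ 1) : (1 - s • B).PosDef := by
  rw [Matrix.posDef_iff_dotProduct_mulVec]
  constructor
  · show (1 - s • B)ᴴ = _
    rw [conjTranspose_sub, conjTranspose_smul, conjTranspose_one]
    congr 1
    ext i j
    simp [Matrix.conjTranspose_apply, hsymm.apply]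
  · intro x hx
    have hQpos : 0 < ∑ i, (x i) ^ 2 := by
      obtain ⟨i, hi⟩ := Function.ne_iff.mp hx
      exact Finset.sum_pos' (fun j _ => sq_nonneg _)
        ⟨i, Finset.mem_univ i, by simpa using sq_pos_of_ne_zero hi⟩
    have hcs := Finset.sum_mul_sq_le_sq_mul_sq Finset.univ x (B.mulVec x)
    have hlt : (∑ i, x i * B.mulVec x i) ^ 2 < (∑ i, (x i) ^ 2) ^ 2 := by
      calc (∑ i, x i * B.mulVec x i) ^ 2
          ≤ (∑ i, (x i) ^ 2) * ∑ i, (B.mulVec x i) ^ 2 := hcs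
        _ < (∑ i, (x i) ^ 2) * ∑ i, (x i) ^ 2 := by
            exact mul_lt_mul_of_pos_left (hsmall x hx) hQpos
        _ = (∑ i, (x i) ^ 2) ^ 2 := (sq _).symm
    have habs : |∑ i, x i * B.mulVec x i| < ∑ i, (x i) ^ 2 :=
      abs_lt_of_sq_lt_sq hlt hQpos.le
    have hmv : (1 - s • B) *ᵥ x = x - s • (B *ᵥ x) := by
      rw [Matrix.sub_mulVec, Matrix.one_mulVec, Matrix.smul_mulVec]
    have hdot : star x ⬝ᵥ ((1 - s • B) *ᵥ x)
        = (∑ i, (x i) ^ 2) - s * ∑ i, x i * B.mulVec x i := by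
      rw [hmv]
      simp only [star_trivial, dotProduct, Pi.sub_apply, Pi.smul_apply, smul_eq_mul,
        Finset.mul_sum]
      rw [← Finset.sum_sub_distrib]
      exact Finset.sum_congr rfl fun i _ => by ring
    rw [hdot]
    have : s * ∑ i, x i * B.mulVec x i < ∑ i, (x i) ^ 2 := by
      calc s * ∑ i, x i * B.mulVec x i ≤ |s * ∑ i, x i * B.mulVec x i| := le_abs_self _
        _ = |s| * |∑ i, x i * B.mulVec x i| := abs_mul _ _
        _ ≤ 1 * |∑ i, x i * B.mulVec x i| :=
            mul_le_mul_of_nonneg_right hs (abs_nonneg _)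
        _ = |∑ i, x i * B.mulVec x i| := one_mul _
        _ < ∑ i, (x i) ^ 2 := habs
    linarith

/-- If `B` is a symmetric real `n×n` matrix with `‖Bv‖ < ‖v‖` for all `v ≠ 0`
(equivalently, all eigenvalues of `B` in `(-1,1)`), `t ∈ ℝ` and `τ = tanh t`, then
`1 − τB` is invertible, and setting `B_t = (1 − τB)⁻¹(B − τ·1)` the determinants
`det(1 + B_t)`, `det(1 − B_t)` are positive and
`(1/(2n))·log(det(1+B_t)/det(1−B_t)) = (1/(2n))·log(det(1+B)/det(1−B)) − t`. -/
theorem normal_evolution_log_det_identity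
    (n : ℕ) (hn : 1 ≤ n) (B : Matrix (Fin n) (Fin n) ℝ) (hsymm : B.IsSymm)
    (hsmall : ∀ v : Fin n → ℝ, v ≠ 0 →
      ∑ i, (B.mulVec v i) ^ 2 < ∑ i, (v i) ^ 2)
    (t : ℝ) :
    IsUnit (1 - Real.tanh t • B) ∧
    (0 < (1 + (1 - Real.tanh t • B)⁻¹ * (B - Real.tanh t • 1)).det ∧
     0 < (1 - (1 - Real.tanh t • B)⁻¹ * (B - Real.tanh t • 1)).det) ∧
    (1 / (2 * (n : ℝ))) *
        Real.log ((1 + (1 - Real.tanh t • B)⁻¹ * (B - Real.tanh t • 1)).det /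
          (1 - (1 - Real.tanh t • B)⁻¹ * (B - Real.tanh t • 1)).det) =
      (1 / (2 * (n : ℝ))) * Real.log ((1 + B).det / (1 - B).det) - t := by
  set τ := Real.tanh t with hτ
  have hc : (0:ℝ) < Real.cosh t := Real.cosh_pos t
  have h1m : 1 - τ = Real.exp (-t) / Real.cosh t := by
    rw [hτ, Real.tanh_eq_sinh_div_cosh, ← Real.cosh_sub_sinh t]
    field_simp
  have h1p : 1 + τ = Real.exp t / Real.cosh t := by
    rw [hτ, Real.tanh_eq_sinh_div_cosh, ← Real.cosh_add_sinh t]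
    field_simp
  have h1mpos : 0 < 1 - τ := by rw [h1m]; positivity
  have h1ppos : 0 < 1 + τ := by rw [h1p]; positivity
  have habs : |τ| ≤ 1 := abs_le.mpr ⟨by linarith, by linarith⟩
  have hA : (1 - τ • B).PosDef := aux_posdef B hsymm hsmall τ habs
  have hP : (1 + B).PosDef := by
    have := aux_posdef B hsymm hsmall (-1) (by norm_num)
    simpa [neg_smul, sub_neg_eq_add] using this
  have hM : (1 - B).PosDef := by
    simpa using aux_posdef B hsymm hsmall 1 (by norm_num)
  set A := 1 - τ • B with hAdef
  have hAdet : 0 < A.det := hA.det_pos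
  have hAunit : IsUnit A := (Matrix.isUnit_iff_isUnit_det A).2 hAdet.ne'.isUnit
  have hAinv : A⁻¹ * A = 1 := Matrix.nonsing_inv_mul A hAdet.ne'.isUnit
  have e1 : 1 + A⁻¹ * (B - τ • 1) = A⁻¹ * ((1 - τ) • (1 + B)) := by
    nth_rewrite 1 [← hAinv]
    rw [← Matrix.mul_add]
    congr 1
    rw [hAdef]
    simp only [sub_smul, smul_add, smul_sub, one_smul]
    abel
  have e2 : 1 - A⁻¹ * (B - τ • 1) = A⁻¹ * ((1 + τ) • (1 - B)) := by
    nth_rewrite 1 [← hAinv]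
    rw [← Matrix.mul_sub]
    congr 1
    rw [hAdef]
    simp only [add_smul, smul_add, smul_sub, one_smul]
    abel
  have d1 : (1 + A⁻¹ * (B - τ • 1)).det = A.det⁻¹ * ((1 - τ) ^ n * (1 + B).det) := by
    rw [e1, Matrix.det_mul, Matrix.det_nonsing_inv, Matrix.det_smul]
    simp [Fintype.card_fin]
  have d2 : (1 - A⁻¹ * (B - τ • 1)).det = A.det⁻¹ * ((1 + τ) ^ n * (1 - B).det) := by
    rw [e2, Matrix.det_mul, Matrix.det_nonsing_inv, Matrix.det_smul]
    simp [Fintype.card_fin]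
  have hPdet : 0 < (1 + B).det := hP.det_pos
  have hMdet : 0 < (1 - B).det := hM.det_pos
  have hd1pos : 0 < (1 + A⁻¹ * (B - τ • 1)).det := by rw [d1]; positivity
  have hd2pos : 0 < (1 - A⁻¹ * (B - τ • 1)).det := by rw [d2]; positivity
  refine ⟨hAunit, ⟨hd1pos, hd2pos⟩, ?_⟩
  have hratio : (1 + A⁻¹ * (B - τ • 1)).det / (1 - A⁻¹ * (B - τ • 1)).det
      = Real.exp (-(2 * t * n)) * ((1 + B).det / (1 - B).det) := by
    rw [d1, d2]
    have hq : (1 - τ) / (1 + τ) = Real.exp (-(2 * t)) := by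
      have hdd : Real.exp (-t) / Real.cosh t / (Real.exp t / Real.cosh t)
          = Real.exp (-t) / Real.exp t := by
        field_simp
      rw [h1m, h1p, hdd, ← Real.exp_sub]
      congr 1
      ring
    have : ((1 - τ) / (1 + τ)) ^ n = Real.exp (-(2 * t * n)) := by
      rw [hq, ← Real.exp_nat_mul]
      ring_nf
    field_simp
    rw [← this]
    field_simp
    rw [← mul_pow]
    congr 1
    exact (mul_div_cancel₀ (1 - τ) h1ppos.ne').symm
  rw [hratio, Real.log_mul (Real.exp_ne_zero _) (by positivity), Real.log_exp]
  have hn' : (n:ℝ) ≠ 0 := by positivity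
  field_simp
  ring
end

section
/- Every C² unit-speed curve with small acceleration γ : I → ℝ^{n+2} in ℍ^{n+1} is injective. -/
section MinkAux

variable {n : ℕ}

lemma mink_symm (x y : Fin (n+2) → ℝ) : mink n x y = mink n y x := by
  simp [mink, mul_comm]

lemma mink_zero_left (y : Fin (n+2) → ℝ) : mink n 0 y = 0 := by
  simp [mink]

lemma mink_add_left (x y z : Fin (n+2) → ℝ) :
    mink n (x + y) z = mink n x z + mink n y z := by
  simp [mink, add_mul, Finset.sum_add_distrib]; ring

lemma mink_sub_left (x y z : Fin (n+2) → ℝ) :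
    mink n (x - y) z = mink n x z - mink n y z := by
  simp [mink, sub_mul, Finset.sum_sub_distrib]; ring

lemma mink_smul_left (c : ℝ) (x y : Fin (n+2) → ℝ) :
    mink n (c • x) y = c * mink n x y := by
  simp only [mink, Pi.smul_apply, smul_eq_mul, mul_sub, Finset.mul_sum]
  congr 1
  · exact Finset.sum_congr rfl fun i _ => by ring
  · ring

lemma mink_add_right (x y z : Fin (n+2) → ℝ) :
    mink n x (y + z) = mink n x y + mink n x z := by
  rw [mink_symm, mink_add_left, mink_symm y x, mink_symm z x]

lemma mink_sub_right (x y z : Fin (n+2) → ℝ) :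
    mink n x (y - z) = mink n x y - mink n x z := by
  rw [mink_symm, mink_sub_left, mink_symm y x, mink_symm z x]

lemma mink_smul_right (c : ℝ) (x y : Fin (n+2) → ℝ) :
    mink n x (c • y) = c * mink n x y := by
  rw [mink_symm, mink_smul_left, mink_symm y x]

lemma nonneg_of_ortho {x z : Fin (n+2) → ℝ} (hx : mink n x x = -1)
    (hxz : mink n x z = 0) : 0 ≤ mink n z z := by
  have hCS : (∑ i : Fin (n+1), x i.castSucc * z i.castSucc) ^ 2 ≤
      (∑ i : Fin (n+1), x i.castSucc * x i.castSucc) *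
      (∑ i : Fin (n+1), z i.castSucc * z i.castSucc) := by
    have h := Finset.sum_mul_sq_le_sq_mul_sq Finset.univ
        (fun i : Fin (n+1) => x i.castSucc) (fun i => z i.castSucc)
    simpa [pow_two] using h
  have hA : (0:ℝ) ≤ ∑ i : Fin (n+1), x i.castSucc * x i.castSucc :=
    Finset.sum_nonneg fun i _ => mul_self_nonneg _
  have hB : (0:ℝ) ≤ ∑ i : Fin (n+1), z i.castSucc * z i.castSucc :=
    Finset.sum_nonneg fun i _ => mul_self_nonneg _
  unfold mink at hx hxz ⊢
  set A := ∑ i : Fin (n+1), x i.castSucc * x i.castSucc with hAdef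
  set B := ∑ i : Fin (n+1), z i.castSucc * z i.castSucc with hBdef
  set C := ∑ i : Fin (n+1), x i.castSucc * z i.castSucc with hCdef
  set xl := x (Fin.last (n+1)) with hxl
  set zl := z (Fin.last (n+1)) with hzl
  by_contra hcon
  push_neg at hcon
  have hC : C = xl * zl := by linarith
  have h2 : xl * xl = A + 1 := by linarith
  have hzl2 : 0 < zl * zl := by nlinarith
  have e1 : (xl * zl) ^ 2 ≤ A * B := by rw [← hC]; exact hCS
  have e2 : (xl * zl) ^ 2 = A * (zl * zl) + zl * zl := by
    linear_combination (zl * zl) * h2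
  have e3 : A * B ≤ A * (zl * zl) := mul_le_mul_of_nonneg_left (by linarith) hA
  linarith [e1, e2, e3, hzl2]

lemma mink_CS {x w a : Fin (n+2) → ℝ} (hx : mink n x x = -1)
    (hxw : mink n x w = 0) (hxa : mink n x a = 0) :
    mink n w a ^ 2 ≤ mink n w w * mink n a a := by
  have key : ∀ lam : ℝ, 0 ≤ mink n a a * (lam * lam) + (2 * mink n w a) * lam + mink n w w := by
    intro lam
    have h1 : mink n x (w + lam • a) = 0 := by
      rw [mink_add_right, mink_smul_right, hxw, hxa]; ring
    have h2 := nonneg_of_ortho hx h1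
    have h3 : mink n (w + lam • a) (w + lam • a) =
        mink n a a * (lam * lam) + (2 * mink n w a) * lam + mink n w w := by
      rw [mink_add_left, mink_add_right, mink_add_right, mink_smul_left,
        mink_smul_right, mink_smul_left, mink_smul_right, mink_symm a w]
      ring
    linarith [h3 ▸ h2]
  have hd := discrim_le_zero key
  rw [discrim] at hd
  nlinarith [hd]

lemma hasDerivWithinAt_mink {f g : ℝ → Fin (n+2) → ℝ} {f' g' : Fin (n+2) → ℝ}
    {s : Set ℝ} {t : ℝ}
    (hf : HasDerivWithinAt f f' s t) (hg : HasDerivWithinAt g g' s t) :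
    HasDerivWithinAt (fun u => mink n (f u) (g u))
      (mink n f' (g t) + mink n (f t) g') s t := by
  have hfc : ∀ i, HasDerivWithinAt (fun u => f u i) (f' i) s t :=
    fun i => hasDerivWithinAt_pi.1 hf i
  have hgc : ∀ i, HasDerivWithinAt (fun u => g u i) (g' i) s t :=
    fun i => hasDerivWithinAt_pi.1 hg i
  have hsum : HasDerivWithinAt
      (fun u => ∑ i : Fin (n+1), f u i.castSucc * g u i.castSucc)
      (∑ i : Fin (n+1), (f' i.castSucc * g t i.castSucc + f t i.castSucc * g' i.castSucc)) s t :=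
    HasDerivWithinAt.fun_sum (fun (i : Fin (n+1)) _ => (hfc i.castSucc).mul (hgc i.castSucc))
  have hlast := (hfc (Fin.last (n+1))).mul (hgc (Fin.last (n+1)))
  have h := hsum.fun_sub hlast
  refine HasDerivWithinAt.congr_deriv h ?_
  simp [mink, Finset.sum_add_distrib]
  ring

end MinkAux

/-- Every `C²` unit-speed curve with small acceleration in `ℍ^{n+1}` is injective. -/
theorem small_acceleration_injective
    (n : ℕ) (I : Set ℝ) (hI : I.OrdConnected)
    (γ γ' γ'' : ℝ → Fin (n + 2) → ℝ)
    (hd1 : ∀ t ∈ I, HasDerivWithinAt γ (γ' t) I t)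
    (hd2 : ∀ t ∈ I, HasDerivWithinAt γ' (γ'' t) I t)
    (hcont : ContinuousOn γ'' I)
    (hhyp : ∀ t ∈ I, mink n (γ t) (γ t) = -1)
    (hpos : ∀ t ∈ I, 0 < γ t (Fin.last (n + 1)))
    (hspeed : ∀ t ∈ I, mink n (γ' t) (γ' t) = 1)
    (hacc : ∀ t ∈ I, mink n (γ'' t - γ t) (γ'' t - γ t) < 1) :
    Set.InjOn γ I := by
  have main : ∀ s t, s ∈ I → t ∈ I → s < t → γ s ≠ γ t := by
    intro s t hsI htI hst hEq
    set J := Set.Icc s t with hJdef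
    have hJI : J ⊆ I := hI.out hsI htI
    have hUD : UniqueDiffOn ℝ J := uniqueDiffOn_Icc hst
    set p := γ s with hp
    set F : ℝ → ℝ := fun u => -(mink n p (γ u)) with hF
    set F1 : ℝ → ℝ := fun u => -(mink n p (γ' u)) with hF1
    set F2 : ℝ → ℝ := fun u => -(mink n p (γ'' u)) with hF2
    -- derivatives of F, F1 within I
    have hdFI : ∀ u ∈ I, HasDerivWithinAt F (F1 u) I u := by
      intro u hu
      have h := (hasDerivWithinAt_mink (hasDerivWithinAt_const u I p) (hd1 u hu)).fun_neg
      simpa [hF, hF1, mink_zero_left] using h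
    have hdF1I : ∀ u ∈ I, HasDerivWithinAt F1 (F2 u) I u := by
      intro u hu
      have h := (hasDerivWithinAt_mink (hasDerivWithinAt_const u I p) (hd2 u hu)).fun_neg
      simpa [hF1, hF2, mink_zero_left] using h
    have hdF : ∀ u ∈ J, HasDerivWithinAt F (F1 u) J u :=
      fun u hu => (hdFI u (hJI hu)).mono hJI
    have hdF1 : ∀ u ∈ J, HasDerivWithinAt F1 (F2 u) J u :=
      fun u hu => (hdF1I u (hJI hu)).mono hJI
    -- identity: ⟨γ, γ'⟩ = 0 on J
    have horth1 : ∀ u ∈ J, mink n (γ u) (γ' u) = 0 := by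
      intro u hu
      have h1 : HasDerivWithinAt (fun v => mink n (γ v) (γ v))
          (mink n (γ' u) (γ u) + mink n (γ u) (γ' u)) J u :=
        hasDerivWithinAt_mink ((hd1 u (hJI hu)).mono hJI) ((hd1 u (hJI hu)).mono hJI)
      have h2 : HasDerivWithinAt (fun v => mink n (γ v) (γ v)) 0 J u :=
        (hasDerivWithinAt_const u J (-1:ℝ)).congr
          (fun v hv => hhyp v (hJI hv)) (hhyp u (hJI hu))
      have heq := (h1.derivWithin (hUD u hu)).symm.trans (h2.derivWithin (hUD u hu))
      rw [mink_symm (γ' u) (γ u)] at heq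
      linarith
    -- identity: ⟨γ, γ''⟩ = -1 on J
    have horth2 : ∀ u ∈ J, mink n (γ u) (γ'' u) = -1 := by
      intro u hu
      have h1 : HasDerivWithinAt (fun v => mink n (γ v) (γ' v))
          (mink n (γ' u) (γ' u) + mink n (γ u) (γ'' u)) J u :=
        hasDerivWithinAt_mink ((hd1 u (hJI hu)).mono hJI) ((hd2 u (hJI hu)).mono hJI)
      have h2 : HasDerivWithinAt (fun v => mink n (γ v) (γ' v)) 0 J u :=
        (hasDerivWithinAt_const u J (0:ℝ)).congr
          (fun v hv => (horth1 v hv)) (horth1 u hu)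
      have heq := (h1.derivWithin (hUD u hu)).symm.trans (h2.derivWithin (hUD u hu))
      rw [hspeed u (hJI hu)] at heq
      linarith
    -- identity: ⟨γ', γ''⟩ = 0 on J
    have horth3 : ∀ u ∈ J, mink n (γ' u) (γ'' u) = 0 := by
      intro u hu
      have h1 : HasDerivWithinAt (fun v => mink n (γ' v) (γ' v))
          (mink n (γ'' u) (γ' u) + mink n (γ' u) (γ'' u)) J u :=
        hasDerivWithinAt_mink ((hd2 u (hJI hu)).mono hJI) ((hd2 u (hJI hu)).mono hJI)
      have h2 : HasDerivWithinAt (fun v => mink n (γ' v) (γ' v)) 0 J u :=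
        (hasDerivWithinAt_const u J (1:ℝ)).congr
          (fun v hv => hspeed v (hJI hv)) (hspeed u (hJI hu))
      have heq := (h1.derivWithin (hUD u hu)).symm.trans (h2.derivWithin (hUD u hu))
      rw [mink_symm (γ'' u) (γ' u)] at heq
      linarith
    have hsJ : s ∈ J := ⟨le_refl s, le_of_lt hst⟩
    have htJ : t ∈ J := ⟨le_of_lt hst, le_refl t⟩
    have hpp : mink n p p = -1 := hhyp s hsI
    have hFs : F s = 1 := by rw [hF]; simp [← hp, hpp]
    have hFt : F t = 1 := by rw [hF]; simp [← hEq, hpp]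
    have hF1s : F1 s = 0 := by rw [hF1]; simp [hp, horth1 s hsJ]
    -- the spacelike projection w and its properties
    have hwfacts : ∀ u ∈ J,
        0 ≤ F u ^ 2 - F1 u ^ 2 - 1 ∧
        (F u - F2 u) ^ 2 ≤ (F u ^ 2 - F1 u ^ 2 - 1) * mink n (γ'' u - γ u) (γ'' u - γ u) := by
      intro u hu
      set α := mink n p (γ u) with hα
      set β := mink n p (γ' u) with hβ
      set w : Fin (n+2) → ℝ := p + α • γ u - β • γ' u with hw
      have hγγ : mink n (γ u) (γ u) = -1 := hhyp u (hJI hu)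
      have hγw : mink n (γ u) w = 0 := by
        rw [hw, mink_sub_right, mink_add_right, mink_smul_right, mink_smul_right,
          hγγ, horth1 u hu, mink_symm (γ u) p]
        ring
      have hww : mink n w w = α ^ 2 - β ^ 2 - 1 := by
        rw [hw]
        rw [mink_sub_left, mink_add_left, mink_smul_left, mink_smul_left]
        rw [mink_sub_right, mink_add_right, mink_smul_right, mink_smul_right]
        rw [mink_sub_right, mink_add_right, mink_smul_right, mink_smul_right]
        rw [mink_sub_right, mink_add_right, mink_smul_right, mink_smul_right]
        rw [hpp, hγγ, horth1 u hu, hspeed u (hJI hu), mink_symm (γ u) p,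
          mink_symm (γ' u) p, mink_symm (γ' u) (γ u), horth1 u hu]
        ring
      have hE : 0 ≤ mink n w w := nonneg_of_ortho hγγ hγw
      have hFα : F u = -α := by rw [hF]
      have hF1β : F1 u = -β := by rw [hF1]
      constructor
      · rw [hFα, hF1β]; rw [hww] at hE; nlinarith [hE]
      · set a : Fin (n+2) → ℝ := γ'' u - γ u with ha
        have hγa : mink n (γ u) a = 0 := by
          rw [ha, mink_sub_right, hγγ, horth2 u hu]; ring
        have hγ'a : mink n (γ' u) a = 0 := by
          rw [ha, mink_sub_right, horth3 u hu, mink_symm (γ' u) (γ u), horth1 u hu]; ring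
        have hwa : mink n w a = mink n p a := by
          rw [hw, mink_sub_left, mink_add_left, mink_smul_left, mink_smul_left,
            hγa, hγ'a]
          ring
        have hpa : mink n p a = F u - F2 u := by
          rw [ha, mink_sub_right, hF, hF2]; ring
        have hcs := mink_CS hγγ hγw hγa
        rw [mink_symm (γ u) w] at hγw
        rw [hwa, hpa, hww] at hcs
        rw [hFα, hF1β]
        calc (F u - F2 u) ^ 2 ≤ (α ^ 2 - β ^ 2 - 1) * mink n a a := hcs
          _ = ((-α) ^ 2 - (-β) ^ 2 - 1) * mink n a a := by ring
    -- F² ≥ 1, hence F ≥ 1 on J by the IVT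
    have hFcont : ContinuousOn F J := fun u hu => (hdF u hu).continuousWithinAt
    have hFsq : ∀ u ∈ J, 1 ≤ F u ^ 2 := by
      intro u hu
      have := (hwfacts u hu).1
      nlinarith [sq_nonneg (F1 u)]
    have hFge1 : ∀ u ∈ J, 1 ≤ F u := by
      intro u hu
      by_contra hlt
      push_neg at hlt
      have hFu : F u ≤ -1 := by nlinarith [hFsq u hu]
      have hsu : s ≤ u := hu.1
      have hIcc : Set.Icc s u ⊆ J := Set.Icc_subset_Icc le_rfl hu.2
      have hIVT := intermediate_value_Icc' hsu (hFcont.mono hIcc)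
      have h0 : (0:ℝ) ∈ Set.Icc (F u) (F s) := by
        rw [hFs]; constructor <;> linarith
      obtain ⟨v, hv, hFv⟩ := hIVT h0
      have := hFsq v (hIcc hv)
      rw [hFv] at this
      norm_num at this
    -- F2 > 0 on J
    have hF2pos : ∀ u ∈ J, 0 < F2 u := by
      intro u hu
      obtain ⟨hE, hcs⟩ := hwfacts u hu
      have haa1 : mink n (γ'' u - γ u) (γ'' u - γ u) < 1 := hacc u (hJI hu)
      have haa0 : 0 ≤ mink n (γ'' u - γ u) (γ'' u - γ u) := by
        apply nonneg_of_ortho (hhyp u (hJI hu))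
        rw [mink_sub_right, horth2 u hu, hhyp u (hJI hu)]; ring
      have hFu := hFge1 u hu
      nlinarith [hcs, hE, haa0, haa1, hFu, sq_nonneg (F1 u),
        mul_nonneg (sub_nonneg.2 haa1.le) hE]
    -- F1 is strictly increasing, so F1 > 0 on (s,t]
    have hIoo : Set.Ioo s t ⊆ interior I := by
      intro x hx
      exact interior_mono (fun y hy => hJI ⟨le_of_lt hy.1, le_of_lt hy.2⟩)
        ((isOpen_Ioo (a := s) (b := t)).subset_interior_iff.mpr (fun y hy => hy) hx)
    have hF1mono : StrictMonoOn F1 J := by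
      apply strictMonoOn_of_deriv_pos (convex_Icc s t)
        (fun u hu => (hdF1 u hu).continuousWithinAt)
      intro x hx
      rw [interior_Icc] at hx
      have hxJ : x ∈ J := ⟨le_of_lt hx.1, le_of_lt hx.2⟩
      have hnhds : I ∈ nhds x := mem_interior_iff_mem_nhds.mp (hIoo hx)
      have hda : HasDerivAt F1 (F2 x) x := (hdF1I x (hJI hxJ)).hasDerivAt hnhds
      rw [hda.deriv]
      exact hF2pos x hxJ
    have hFmono : StrictMonoOn F J := by
      apply strictMonoOn_of_deriv_pos (convex_Icc s t) hFcont
      intro x hx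
      rw [interior_Icc] at hx
      have hxJ : x ∈ J := ⟨le_of_lt hx.1, le_of_lt hx.2⟩
      have hnhds : I ∈ nhds x := mem_interior_iff_mem_nhds.mp (hIoo hx)
      have hda : HasDerivAt F (F1 x) x := (hdFI x (hJI hxJ)).hasDerivAt hnhds
      rw [hda.deriv]
      have := hF1mono hsJ hxJ hx.1
      rw [hF1s] at this
      exact this
    have : F s < F t := hFmono hsJ htJ hst
    rw [hFs, hFt] at this
    exact lt_irrefl 1 this
  intro a ha b hb hab
  by_contra hne
  rcases lt_or_gt_of_ne hne with h | h
  · exact main a b ha hb h hab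
  · exact main b a hb ha h hab.symm
end

section
/- Let M be a smooth n-manifold and let σ, ν : M → ℝ^{n+2} be an immersion of M into ℍ^{n+1} with unit normal ν having small principal curvatures. Then the maps σ + ν and σ − ν take values in the future null cone minus the origin, i.e. ⟨σ(p) ± ν(p), σ(p) ± ν(p)⟩ = 0, σ(p) ± ν(p) ≠ 0 and (σ(p) ± ν(p))_{n+2} > 0 for all p; and both maps have injective differential at every point of M. -/
open scoped Manifold

lemma mink_add (n : ℕ) (x y : Fin (n + 2) → ℝ) :
    mink n (x + y) (x + y) = mink n x x + 2 * mink n x y + mink n y y := by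
  simp only [mink, Pi.add_apply]
  rw [show (∑ i : Fin (n+1), (x i.castSucc + y i.castSucc) * (x i.castSucc + y i.castSucc))
      = (∑ i : Fin (n+1), x i.castSucc * x i.castSucc)
        + 2 * (∑ i : Fin (n+1), x i.castSucc * y i.castSucc)
        + (∑ i : Fin (n+1), y i.castSucc * y i.castSucc) by
    rw [Finset.mul_sum, ← Finset.sum_add_distrib, ← Finset.sum_add_distrib]
    exact Finset.sum_congr rfl fun i _ => by ring]
  ring

lemma mink_sub (n : ℕ) (x y : Fin (n + 2) → ℝ) :
    mink n (x - y) (x - y) = mink n x x - 2 * mink n x y + mink n y y := by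
  simp only [mink, Pi.sub_apply]
  rw [show (∑ i : Fin (n+1), (x i.castSucc - y i.castSucc) * (x i.castSucc - y i.castSucc))
      = (∑ i : Fin (n+1), x i.castSucc * x i.castSucc)
        - 2 * (∑ i : Fin (n+1), x i.castSucc * y i.castSucc)
        + (∑ i : Fin (n+1), y i.castSucc * y i.castSucc) by
    rw [Finset.mul_sum, ← Finset.sum_sub_distrib, ← Finset.sum_add_distrib]
    exact Finset.sum_congr rfl fun i _ => by ring]
  ring

lemma mink_neg (n : ℕ) (x : Fin (n + 2) → ℝ) :
    mink n (-x) (-x) = mink n x x := by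
  simp [mink]

/-- If `σ : M → ℍ^{n+1}` is an immersion with unit normal `ν` having small principal
curvatures, then `σ + ν` and `σ − ν` take values in the future null cone minus the
origin, and both maps have injective differential at every point (they represent the
hyperbolic Gauss maps `G_σ^±`, which are local diffeomorphisms). -/
theorem hyperbolic_gauss_maps_local_diffeos
    {n : ℕ} {M : Type*} [TopologicalSpace M]
    [ChartedSpace (EuclideanSpace ℝ (Fin n)) M]
    [IsManifold (𝓡 n) (⊤ : ℕ∞) M]
    (σ ν : M → Fin (n + 2) → ℝ)
    (hσ : ContMDiff (𝓡 n) 𝓘(ℝ, Fin (n + 2) → ℝ) (⊤ : ℕ∞) σ)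
    (hν : ContMDiff (𝓡 n) 𝓘(ℝ, Fin (n + 2) → ℝ) (⊤ : ℕ∞) ν)
    (hσσ : ∀ p, mink n (σ p) (σ p) = -1)
    (hpos : ∀ p, 0 < σ p (Fin.last (n + 1)))
    (hνν : ∀ p, mink n (ν p) (ν p) = 1)
    (hσν : ∀ p, mink n (σ p) (ν p) = 0)
    (himm : ∀ p, Function.Injective (mfderiv (𝓡 n) 𝓘(ℝ, Fin (n + 2) → ℝ) σ p))
    (hnormal : ∀ p (v : EuclideanSpace ℝ (Fin n)),
      mink n (mfderiv (𝓡 n) 𝓘(ℝ, Fin (n + 2) → ℝ) σ p v) (ν p) = 0)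
    (hsmall : ∀ p (v : EuclideanSpace ℝ (Fin n)), v ≠ 0 →
      mink n (mfderiv (𝓡 n) 𝓘(ℝ, Fin (n + 2) → ℝ) ν p v)
          (mfderiv (𝓡 n) 𝓘(ℝ, Fin (n + 2) → ℝ) ν p v) <
        mink n (mfderiv (𝓡 n) 𝓘(ℝ, Fin (n + 2) → ℝ) σ p v)
          (mfderiv (𝓡 n) 𝓘(ℝ, Fin (n + 2) → ℝ) σ p v)) :
    ∀ p : M,
      mink n (σ p + ν p) (σ p + ν p) = 0 ∧
      σ p + ν p ≠ 0 ∧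
      0 < (σ p + ν p) (Fin.last (n + 1)) ∧
      mink n (σ p - ν p) (σ p - ν p) = 0 ∧
      σ p - ν p ≠ 0 ∧
      0 < (σ p - ν p) (Fin.last (n + 1)) ∧
      Function.Injective
        (mfderiv (𝓡 n) 𝓘(ℝ, Fin (n + 2) → ℝ) (fun q => σ q + ν q) p) ∧
      Function.Injective
        (mfderiv (𝓡 n) 𝓘(ℝ, Fin (n + 2) → ℝ) (fun q => σ q - ν q) p) := by
  intro p
  have hnullA : mink n (σ p + ν p) (σ p + ν p) = 0 := by
    rw [mink_add, hσσ, hνν, hσν]; ring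
  have hnullB : mink n (σ p - ν p) (σ p - ν p) = 0 := by
    rw [mink_sub, hσσ, hνν, hσν]; ring
  set a := σ p (Fin.last (n + 1)) with ha
  set b := ν p (Fin.last (n + 1)) with hb
  have hCS := Finset.sum_mul_sq_le_sq_mul_sq Finset.univ
    (fun i : Fin (n+1) => σ p i.castSucc) (fun i : Fin (n+1) => ν p i.castSucc)
  have hS : (∑ i : Fin (n+1), σ p i.castSucc ^ 2) = a ^ 2 - 1 := by
    have h := hσσ p; simp only [mink] at h
    simp only [sq]; linarith
  have hN : (∑ i : Fin (n+1), ν p i.castSucc ^ 2) = b ^ 2 + 1 := by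
    have h := hνν p; simp only [mink] at h
    simp only [sq]; linarith
  have hP : (∑ i : Fin (n+1), σ p i.castSucc * ν p i.castSucc) = a * b := by
    have h := hσν p; simp only [mink] at h; linarith
  rw [hS, hN, hP] at hCS
  have hb2 : b ^ 2 < a ^ 2 := by nlinarith
  have hapos : 0 < a := hpos p
  have hlastA : 0 < (σ p + ν p) (Fin.last (n + 1)) := by
    simp only [Pi.add_apply, ← ha, ← hb]; nlinarith
  have hlastB : 0 < (σ p - ν p) (Fin.last (n + 1)) := by
    simp only [Pi.sub_apply, ← ha, ← hb]; nlinarith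
  have hneA : σ p + ν p ≠ 0 := fun h => by rw [h] at hlastA; simp at hlastA
  have hneB : σ p - ν p ≠ 0 := fun h => by rw [h] at hlastB; simp at hlastB
  have hσd : MDifferentiableAt (𝓡 n) 𝓘(ℝ, Fin (n + 2) → ℝ) σ p :=
    hσ.mdifferentiableAt (by simp)
  have hνd : MDifferentiableAt (𝓡 n) 𝓘(ℝ, Fin (n + 2) → ℝ) ν p :=
    hν.mdifferentiableAt (by simp)
  obtain ⟨Dσ', hDσ'⟩ : ∃ D : EuclideanSpace ℝ (Fin n) →L[ℝ] (Fin (n + 2) → ℝ),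
      D = mfderiv (𝓡 n) 𝓘(ℝ, Fin (n + 2) → ℝ) σ p := ⟨_, rfl⟩
  obtain ⟨Dν', hDν'⟩ : ∃ D : EuclideanSpace ℝ (Fin n) →L[ℝ] (Fin (n + 2) → ℝ),
      D = mfderiv (𝓡 n) 𝓘(ℝ, Fin (n + 2) → ℝ) ν p := ⟨_, rfl⟩
  have eσ : ∀ u : EuclideanSpace ℝ (Fin n),
      Dσ' u = mfderiv (𝓡 n) 𝓘(ℝ, Fin (n + 2) → ℝ) σ p u :=
    fun u => congrFun (congrArg DFunLike.coe hDσ') u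
  have eν : ∀ u : EuclideanSpace ℝ (Fin n),
      Dν' u = mfderiv (𝓡 n) 𝓘(ℝ, Fin (n + 2) → ℝ) ν p u :=
    fun u => congrFun (congrArg DFunLike.coe hDν') u
  have haddD : HasMFDerivAt (𝓡 n) 𝓘(ℝ, Fin (n + 2) → ℝ) (fun q => σ q + ν q) p (Dσ' + Dν') := by
    rw [hDσ', hDν']
    exact hσd.hasMFDerivAt.add hνd.hasMFDerivAt
  have hsubD : HasMFDerivAt (𝓡 n) 𝓘(ℝ, Fin (n + 2) → ℝ) (fun q => σ q - ν q) p (Dσ' - Dν') := by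
    rw [hDσ', hDν']
    exact hσd.hasMFDerivAt.sub hνd.hasMFDerivAt
  have haddE : ∀ u : EuclideanSpace ℝ (Fin n),
      mfderiv (𝓡 n) 𝓘(ℝ, Fin (n + 2) → ℝ) (fun q => σ q + ν q) p u = Dσ' u + Dν' u :=
    fun u => congrFun (congrArg DFunLike.coe haddD.mfderiv) u
  have hsubE : ∀ u : EuclideanSpace ℝ (Fin n),
      mfderiv (𝓡 n) 𝓘(ℝ, Fin (n + 2) → ℝ) (fun q => σ q - ν q) p u = Dσ' u - Dν' u :=
    fun u => congrFun (congrArg DFunLike.coe hsubD.mfderiv) u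
  refine ⟨hnullA, hneA, hlastA, hnullB, hneB, hlastB, ?_, ?_⟩
  · intro v w hvw
    have hvw2 : Dσ' v + Dν' v = Dσ' w + Dν' w := by
      rw [← haddE v, ← haddE w]; exact hvw
    by_contra hne
    have hv0 : v - w ≠ 0 := sub_ne_zero.mpr hne
    have hlt := hsmall p (v - w) hv0
    rw [← eν (v - w), ← eσ (v - w)] at hlt
    have hz : Dσ' (v - w) + Dν' (v - w) = 0 := by
      erw [map_sub Dσ' v w, map_sub Dν' v w]
      rw [sub_add_sub_comm]; exact sub_eq_zero.mpr hvw2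
    rw [eq_neg_of_add_eq_zero_right hz, mink_neg] at hlt
    exact lt_irrefl _ hlt
  · intro v w hvw
    have hvw2 : Dσ' v - Dν' v = Dσ' w - Dν' w := by
      rw [← hsubE v, ← hsubE w]; exact hvw
    by_contra hne
    have hv0 : v - w ≠ 0 := sub_ne_zero.mpr hne
    have hlt := hsmall p (v - w) hv0
    rw [← eν (v - w), ← eσ (v - w)] at hlt
    have hz : Dσ' (v - w) - Dν' (v - w) = 0 := by
      erw [map_sub Dσ' v w, map_sub Dν' v w]
      rw [sub_sub_sub_comm]; exact sub_eq_zero.mpr hvw2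
    rw [(sub_eq_zero.mp hz).symm] at hlt
    exact lt_irrefl _ hlt
end

section
/- On ℝ³ with the Minkowski form ⟨x,y⟩ = x₁y₁ + x₂y₂ − x₃y₃, define the Lorentzian cross product a ⊠ b = (a₂b₃ − a₃b₂, a₃b₁ − a₁b₃, a₂b₁ − a₁b₂), and define smooth vector fields X, Y on ℝ³ × ℝ³ by X(x,v) = (x ⊠ v, 0) and Y(x,v) = (0, x ⊠ v). Then at every point (x,v) with ⟨x,x⟩ = −1, ⟨v,v⟩ = 1 and ⟨x,v⟩ = 0, one has DY_{(x,v)}(X(x,v)) − DX_{(x,v)}(Y(x,v)) = (v, x), where D denotes the Fréchet derivative; that is, the Lie bracket of X and Y at points of T¹ℍ² equals the generator χ = (v,x) of the geodesic flow (up to sign convention for the bracket). -/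
/-- The Minkowski bilinear form on `ℝ³`: `⟨x,y⟩ = x₁y₁ + x₂y₂ − x₃y₃`. -/
noncomputable def mink3 (x y : Fin 3 → ℝ) : ℝ :=
  x 0 * y 0 + x 1 * y 1 - x 2 * y 2

/-- The Lorentzian cross product
`a ⊠ b = (a₂b₃ − a₃b₂, a₃b₁ − a₁b₃, a₂b₁ − a₁b₂)` (1-based indices). -/
noncomputable def lcross (a b : Fin 3 → ℝ) : Fin 3 → ℝ :=
  ![a 1 * b 2 - a 2 * b 1, a 2 * b 0 - a 0 * b 2, a 1 * b 0 - a 0 * b 1]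

/-- The vector field `X(x,v) = (x ⊠ v, 0)` (horizontal lift of `x ⊠ v`). -/
noncomputable def Xfield (p : (Fin 3 → ℝ) × (Fin 3 → ℝ)) :
    (Fin 3 → ℝ) × (Fin 3 → ℝ) :=
  (lcross p.1 p.2, 0)

/-- The vector field `Y(x,v) = (0, x ⊠ v)` (vertical lift of `x ⊠ v`). -/
noncomputable def Yfield (p : (Fin 3 → ℝ) × (Fin 3 → ℝ)) :
    (Fin 3 → ℝ) × (Fin 3 → ℝ) :=
  (0, lcross p.1 p.2)


noncomputable def lcrossL : (Fin 3 → ℝ) →ₗ[ℝ] (Fin 3 → ℝ) →ₗ[ℝ] (Fin 3 → ℝ) :=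
  LinearMap.mk₂ ℝ lcross
    (by intro a a' b; funext i; fin_cases i <;> simp [lcross] <;> ring)
    (by intro c a b; funext i; fin_cases i <;> simp [lcross] <;> ring)
    (by intro a b b'; funext i; fin_cases i <;> simp [lcross] <;> ring)
    (by intro c a b; funext i; fin_cases i <;> simp [lcross] <;> ring)

noncomputable def lcrossCL : (Fin 3 → ℝ) →L[ℝ] (Fin 3 → ℝ) →L[ℝ] (Fin 3 → ℝ) :=
  LinearMap.toContinuousLinearMap
    { toFun := fun a => LinearMap.toContinuousLinearMap (lcrossL a),
      map_add' := by intro a a'; ext w; simp [lcrossL],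
      map_smul' := by intro c a; ext w; simp [lcrossL] }

lemma hbil : IsBoundedBilinearMap ℝ (fun p : (Fin 3 → ℝ) × (Fin 3 → ℝ) => lcross p.1 p.2) := by
  have := lcrossCL.isBoundedBilinearMap
  convert this using 2 <;> rfl

/-- At every point of `T¹ℍ²`, the Lie bracket of the horizontal and vertical lifts
`X(x,v) = (x ⊠ v, 0)` and `Y(x,v) = (0, x ⊠ v)` equals the generator `χ = (v,x)` of the
geodesic flow. -/
theorem lie_bracket_eq_geodesic_generator
    (x v : Fin 3 → ℝ)
    (hx : mink3 x x = -1) (hv : mink3 v v = 1) (hxv : mink3 x v = 0) :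
    fderiv ℝ Yfield (x, v) (Xfield (x, v)) -
      fderiv ℝ Xfield (x, v) (Yfield (x, v)) = (v, x) := by
  have hg : HasFDerivAt (fun p : (Fin 3 → ℝ) × (Fin 3 → ℝ) => lcross p.1 p.2)
      (hbil.deriv (x, v)) (x, v) := hbil.hasFDerivAt (x, v)
  have hY : HasFDerivAt Yfield
      ((ContinuousLinearMap.inr ℝ (Fin 3 → ℝ) (Fin 3 → ℝ)).comp (hbil.deriv (x, v))) (x, v) :=
    ((ContinuousLinearMap.inr ℝ (Fin 3 → ℝ) (Fin 3 → ℝ)).hasFDerivAt.comp _ hg)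
  have hX : HasFDerivAt Xfield
      ((ContinuousLinearMap.inl ℝ (Fin 3 → ℝ) (Fin 3 → ℝ)).comp (hbil.deriv (x, v))) (x, v) :=
    ((ContinuousLinearMap.inl ℝ (Fin 3 → ℝ) (Fin 3 → ℝ)).hasFDerivAt.comp _ hg)
  rw [hY.fderiv, hX.fderiv]
  simp only [Xfield, Yfield, ContinuousLinearMap.comp_apply,
    IsBoundedBilinearMap.deriv_apply, ContinuousLinearMap.inr_apply,
    ContinuousLinearMap.inl_apply]
  simp only [mink3] at hx hv hxv
  ext i <;> fin_cases i <;>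
    simp [lcross, Prod.sub_def] <;>
    [linear_combination (-(v 0)) * hx + (x 0) * hxv;
     linear_combination (-(v 1)) * hx + (x 1) * hxv;
     linear_combination (-(v 2)) * hx + (x 2) * hxv;
     linear_combination (x 0) * hv - (v 0) * hxv;
     linear_combination (x 1) * hv - (v 1) * hxv;
     linear_combination (x 2) * hv - (v 2) * hxv]
end
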